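/- Let μ > 0, p ∈ (1,2), G > 0, and let (R_t)_{t≥1}, (D_t)_{t≥1} be nonnegative sequences satisfying, with step sizes η_t = 2/(μ t), the recursion R_{t+1} ≤ ((t−1)/t)·R_t − η_t·(μ/2)^((2−p)/2)·D_t + 4 G^p/(μ^p t^p) for all t ≥ 1. Then for every T ≥ 1: (1/T)∑_{t=1}^T D_t + (μ/2)^(p/2)·R_{T+1} ≤ 8 G^p (μ/2)^(p/2) / ((2−p) μ^p T^(p−1)). -/

import Mathlib

open Finset

lemma aux_per_term (p : ℝ) (hp1 : 1 < p) (hp2 : p < 2) (s : ℕ) (hs : 1 ≤ s) :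
    (2 - p) * (s : ℝ) ^ (1 - p) ≤ (s : ℝ) ^ (2 - p) - ((s : ℝ) - 1) ^ (2 - p) := by
  have hs0 : (0 : ℝ) < s := by exact_mod_cast hs
  have hq0 : (0:ℝ) ≤ 2 - p := by linarith
  rcases eq_or_lt_of_le hs with h1 | h1
  · have : (s : ℝ) = 1 := by exact_mod_cast h1.symm
    rw [this]
    simp only [Real.one_rpow, sub_self]
    rw [Real.zero_rpow (by linarith)]
    nlinarith
  · have hs1 : (1:ℝ) < s := by exact_mod_cast h1
    have hinv : -1 ≤ -(1 / (s:ℝ)) := by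
      rw [neg_le_neg_iff]
      exact div_le_one_of_le₀ (by linarith) (by positivity)
    have hbern := rpow_one_add_le_one_add_mul_self hinv hq0 (by linarith)
    have hpos : (0:ℝ) ≤ 1 + -(1/(s:ℝ)) := by
      have : 1/(s:ℝ) ≤ 1 := div_le_one_of_le₀ (by linarith) (by positivity)
      linarith
    have key : ((s:ℝ) - 1) ^ (2 - p) = (s:ℝ) ^ (2-p) * (1 + -(1/(s:ℝ))) ^ (2-p) := by
      rw [← Real.mul_rpow (le_of_lt hs0) hpos]
      congr 1
      field_simp
      ring
    rw [key]
    have h2 : (s:ℝ) ^ (2-p) * (1 + -(1/(s:ℝ))) ^ (2-p)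
        ≤ (s:ℝ) ^ (2-p) * (1 + (2-p) * -(1/(s:ℝ))) := by
      apply mul_le_mul_of_nonneg_left hbern (Real.rpow_nonneg (le_of_lt hs0) _)
    have h3 : (s:ℝ) ^ (2-p) * (1/(s:ℝ)) = (s:ℝ) ^ (1-p) := by
      have hadd := Real.rpow_add hs0 (1-p) 1
      rw [Real.rpow_one] at hadd
      rw [show (1:ℝ)-p+1 = 2-p by ring] at hadd
      rw [hadd]
      field_simp
    have h4 : (s:ℝ)^(2-p) * (1 + (2-p) * -(1/(s:ℝ)))
        = (s:ℝ)^(2-p) - (2-p) * ((s:ℝ)^(2-p) * (1/(s:ℝ))) := by ring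
    rw [h3] at h4
    linarith

lemma aux_sum (p : ℝ) (hp1 : 1 < p) (hp2 : p < 2) (T : ℕ) :
    ∑ t ∈ Finset.Icc 1 T, (t:ℝ)^(1-p) ≤ (T:ℝ)^(2-p) / (2-p) := by
  have hq : (0:ℝ) < 2 - p := by linarith
  rw [le_div_iff₀ hq]
  calc (∑ t ∈ Finset.Icc 1 T, (t:ℝ)^(1-p)) * (2-p)
      = ∑ t ∈ Finset.Icc 1 T, (2-p) * (t:ℝ)^(1-p) := by
        rw [Finset.sum_mul]; exact Finset.sum_congr rfl (fun i _ => by ring)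
    _ ≤ ∑ t ∈ Finset.Icc 1 T, ((t:ℝ)^(2-p) - ((t:ℝ)-1)^(2-p)) :=
        Finset.sum_le_sum (fun i hi => aux_per_term p hp1 hp2 i (Finset.mem_Icc.mp hi).1)
    _ = ∑ i ∈ Finset.range T, ((((i+1:ℕ)):ℝ)^(2-p) - ((i:ℕ):ℝ)^(2-p)) := by
        rw [← Finset.Ico_add_one_right_eq_Icc, Finset.sum_Ico_eq_sum_range]
        apply Finset.sum_congr (by congr 1)
        intro i _
        push_cast
        rw [show (1:ℝ)+i - 1 = (i:ℝ) by ring, show (1:ℝ)+(i:ℝ) = (i:ℝ)+1 by ring]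
    _ = ((T:ℕ):ℝ)^(2-p) - ((0:ℕ):ℝ)^(2-p) :=
        Finset.sum_range_sub (fun i => ((i:ℕ):ℝ)^(2-p)) T
    _ = (T:ℝ)^(2-p) := by simp [Real.zero_rpow hq.ne']

theorem strongly_convex_sgd_recursion (μ p G : ℝ) (hμ : 0 < μ) (hp1 : 1 < p) (hp2 : p < 2)
    (hG : 0 < G) (R D : ℕ → ℝ) (hR : ∀ t, 0 ≤ R t) (hD : ∀ t, 0 ≤ D t)
    (hrec : ∀ t : ℕ, 1 ≤ t →
      R (t + 1) ≤ (((t : ℝ) - 1) / t) * R t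
        - (2 / (μ * t)) * (μ / 2) ^ ((2 - p) / 2) * D t
        + 4 * G ^ p / (μ ^ p * (t : ℝ) ^ p))
    (T : ℕ) (hT : 1 ≤ T) :
    (1 / (T : ℝ)) * ∑ t ∈ Finset.Icc 1 T, D t + (μ / 2) ^ (p / 2) * R (T + 1)
      ≤ 8 * G ^ p * (μ / 2) ^ (p / 2) / ((2 - p) * μ ^ p * (T : ℝ) ^ (p - 1)) := by
  have hq : (0:ℝ) < 2 - p := by linarith
  set c : ℝ := (μ/2) ^ ((2-p)/2) with hc
  set a : ℝ := (μ/2) ^ (p/2) with ha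
  have hA : (0:ℝ) < μ/2 := by linarith
  have hapos : 0 < a := Real.rpow_pos_of_pos hA _
  have hcpos : 0 < c := Real.rpow_pos_of_pos hA _
  have hGp : 0 < G ^ p := Real.rpow_pos_of_pos hG _
  have hμp : 0 < μ ^ p := Real.rpow_pos_of_pos hμ _
  -- key telescoped inequality
  have key : ∀ t : ℕ, 1 ≤ t →
      (t:ℝ) * R (t+1) + (2/μ) * c * ∑ s ∈ Finset.Icc 1 t, D s
        ≤ (4 * G ^ p / μ ^ p) * ∑ s ∈ Finset.Icc 1 t, (s:ℝ)^(1-p) := by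
    intro t ht
    induction t, ht using Nat.le_induction with
    | base =>
      have h := hrec 1 le_rfl
      rw [Finset.Icc_self, Finset.sum_singleton, Finset.sum_singleton]
      push_cast at h ⊢
      rw [Real.one_rpow] at h
      rw [Real.one_rpow]
      rw [show ((1:ℝ)-1)/1 = 0 by norm_num, mul_one, mul_one] at h
      linarith
    | succ t ht ih =>
      have h := hrec (t+1) (by omega)
      have ht0 : (0:ℝ) < (t:ℝ) + 1 := by positivity
      have hne : ((t:ℝ)+1) ≠ 0 := ne_of_gt ht0
      have hμne : μ ≠ 0 := ne_of_gt hμ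
      push_cast at h
      -- rpow identity : (t+1)^(1-p) * (t+1)^p = t+1
      have hrp : ((t:ℝ)+1)^(1-p) * ((t:ℝ)+1)^p = (t:ℝ)+1 := by
        rw [← Real.rpow_add ht0, show (1:ℝ)-p+p = 1 by ring, Real.rpow_one]
      have hpp : (0:ℝ) < ((t:ℝ)+1)^p := Real.rpow_pos_of_pos ht0 _
      have h2 : ((t:ℝ)+1) * R (t+2)
          ≤ (t:ℝ) * R (t+1) - (2/μ) * c * D (t+1)
            + (4 * G ^ p / μ ^ p) * ((t:ℝ)+1)^(1-p) := by
        have h' := mul_le_mul_of_nonneg_left h ht0.le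
        have e1 : ((t:ℝ)+1) * (((t:ℝ)+1-1)/((t:ℝ)+1) * R (t+1)) = (t:ℝ) * R (t+1) := by
          field_simp
          ring
        have e2 : ((t:ℝ)+1) * (2/(μ*((t:ℝ)+1)) * c * D (t+1)) = (2/μ) * c * D (t+1) := by
          field_simp
        have e3 : ((t:ℝ)+1) * (4 * G^p/(μ^p*((t:ℝ)+1)^p))
            = (4 * G ^ p / μ ^ p) * ((t:ℝ)+1)^(1-p) := by
          have hd : ((t:ℝ)+1)^(1-p) = ((t:ℝ)+1)/((t:ℝ)+1)^p := by
            rw [eq_div_iff (ne_of_gt hpp)]; exact hrp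
          rw [hd]
          field_simp
        calc ((t:ℝ)+1) * R (t+2)
            ≤ ((t:ℝ)+1) * (((t:ℝ)+1-1)/((t:ℝ)+1) * R (t+1))
              - ((t:ℝ)+1) * (2/(μ*((t:ℝ)+1)) * c * D (t+1))
              + ((t:ℝ)+1) * (4 * G^p/(μ^p*((t:ℝ)+1)^p)) := by nlinarith [h']
          _ = (t:ℝ) * R (t+1) - (2/μ) * c * D (t+1)
              + (4 * G ^ p / μ ^ p) * ((t:ℝ)+1)^(1-p) := by rw [e1, e2, e3]
      rw [Finset.sum_Icc_succ_top (by omega : 1 ≤ t+1),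
        Finset.sum_Icc_succ_top (by omega : 1 ≤ t+1)]
      push_cast
      linarith [ih, h2]
  -- assemble
  have hT0 : (0:ℝ) < (T:ℝ) := by exact_mod_cast hT
  have hTp1 : (0:ℝ) < (T:ℝ)^(p-1) := Real.rpow_pos_of_pos hT0 _
  have hsum := aux_sum p hp1 hp2 T
  have hkey := key T hT
  have hK : (0:ℝ) ≤ 4 * G ^ p / μ ^ p := by positivity
  have hT2 : (T:ℝ)^(2-p) * (T:ℝ)^(p-1) = (T:ℝ) := by
    rw [← Real.rpow_add hT0, show (2:ℝ)-p+(p-1) = 1 by ring, Real.rpow_one]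
  have hT2' : (T:ℝ)^(2-p) = (T:ℝ) / (T:ℝ)^(p-1) := by
    rw [eq_div_iff (ne_of_gt hTp1)]; exact hT2
  have hmain : (T:ℝ) * R (T+1) + (2/μ) * c * ∑ s ∈ Finset.Icc 1 T, D s
      ≤ 4 * G ^ p * (T:ℝ) / (μ ^ p * (2-p) * (T:ℝ)^(p-1)) := by
    calc (T:ℝ) * R (T+1) + (2/μ) * c * ∑ s ∈ Finset.Icc 1 T, D s
        ≤ (4 * G ^ p / μ ^ p) * ∑ s ∈ Finset.Icc 1 T, (s:ℝ)^(1-p) := hkey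
      _ ≤ (4 * G ^ p / μ ^ p) * ((T:ℝ)^(2-p)/(2-p)) := mul_le_mul_of_nonneg_left hsum hK
      _ = 4 * G ^ p * (T:ℝ) / (μ ^ p * (2-p) * (T:ℝ)^(p-1)) := by
          rw [hT2']; field_simp
  have hac : a * ((2/μ) * c) = 1 := by
    have h6 : a * c = μ/2 := by
      rw [ha, hc, ← Real.rpow_add hA, show p/2+(2-p)/2 = 1 by ring, Real.rpow_one]
    calc a * ((2/μ) * c) = (a*c) * (2/μ) := by ring
      _ = (μ/2) * (2/μ) := by rw [h6]
      _ = 1 := by field_simp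
  have h5 := mul_le_mul_of_nonneg_left hmain (le_of_lt (div_pos hapos hT0))
  have eq1 : (a/(T:ℝ)) * ((T:ℝ) * R (T+1) + (2/μ) * c * ∑ s ∈ Finset.Icc 1 T, D s)
      = a * R (T+1) + (1/(T:ℝ)) * ∑ s ∈ Finset.Icc 1 T, D s := by
    have e : (a/(T:ℝ)) * ((2/μ) * c * ∑ s ∈ Finset.Icc 1 T, D s)
        = (a * ((2/μ)*c)) * (∑ s ∈ Finset.Icc 1 T, D s) / (T:ℝ) := by ring
    rw [mul_add, e, hac]
    field_simp
  have eq3 : (a/(T:ℝ)) * (4 * G ^ p * (T:ℝ) / (μ ^ p * (2-p) * (T:ℝ)^(p-1)))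
      = 4 * G ^ p * a / (μ ^ p * (2-p) * (T:ℝ)^(p-1)) := by
    field_simp
  rw [eq1, eq3] at h5
  have hfin : 4 * G ^ p * a / (μ ^ p * (2-p) * (T:ℝ)^(p-1))
      ≤ 8 * G ^ p * a / ((2 - p) * μ ^ p * (T:ℝ)^(p-1)) := by
    rw [div_le_div_iff₀ (by positivity) (by positivity)]
    nlinarith [mul_pos (mul_pos hμp hq) hTp1, mul_pos hGp hapos]
  linarith
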